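/- Let S = [[A, B], [C, D]] be a symplectic matrix. Then D maps the kernel of B onto the orthogonal complement of the range of B, i.e., D(ker B) = (R(B))ᗮ, and this restriction D : ker(B) → (R(B))ᗮ is a linear isomorphism. -/

import Mathlib

open Matrix

theorem symplectic_D_iso_kerB_rangeB_perp {d : ℕ} (A B C D : Matrix (Fin d) (Fin d) ℝ)
    (hS : (fromBlocks A B C D)ᵀ * fromBlocks 0 1 (-1) 0 * fromBlocks A B C D
        = fromBlocks (0 : Matrix (Fin d) (Fin d) ℝ) 1 (-1) 0) :
    (LinearMap.ker (Matrix.toEuclideanLin B)).map (Matrix.toEuclideanLin D)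
        = (LinearMap.range (Matrix.toEuclideanLin B))ᗮ
      ∧ Set.InjOn (Matrix.toEuclideanLin D)
        (LinearMap.ker (Matrix.toEuclideanLin B) : Set (EuclideanSpace ℝ (Fin d))) := by
  rw [Matrix.fromBlocks_transpose, Matrix.fromBlocks_multiply, Matrix.fromBlocks_multiply,
    Matrix.fromBlocks_inj] at hS
  simp only [Matrix.mul_zero, Matrix.mul_one, Matrix.mul_neg, Matrix.zero_mul, Matrix.one_mul,
    Matrix.neg_mul, add_zero, zero_add] at hS
  obtain ⟨h11, h12, h21, h22⟩ := hS
  have hDB : Dᵀ * B = Bᵀ * D := by linear_combination (norm := noncomm_ring) -h22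
  have hAD : Aᵀ * D - Cᵀ * B = 1 := by linear_combination (norm := noncomm_ring) h12
  -- core injectivity
  have hinj0 : ∀ x : Fin d → ℝ, B *ᵥ x = 0 → D *ᵥ x = 0 → x = 0 := by
    intro x hB hD
    have : (Aᵀ * D - Cᵀ * B) *ᵥ x = x := by rw [hAD, Matrix.one_mulVec]
    rw [← this, Matrix.sub_mulVec, ← Matrix.mulVec_mulVec, ← Matrix.mulVec_mulVec, hB, hD]
    simp
  -- core orthogonality
  have key : ∀ x y : Fin d → ℝ, B *ᵥ x = 0 → (D *ᵥ x) ⬝ᵥ (B *ᵥ y) = 0 := by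
    intro x y hx
    rw [Matrix.dotProduct_mulVec, ← Matrix.mulVec_transpose, Matrix.mulVec_mulVec, ← hDB,
      ← Matrix.mulVec_mulVec, hx]
    simp
  -- reformulate applications via mulVec
  have happ : ∀ (M : Matrix (Fin d) (Fin d) ℝ) (x : EuclideanSpace ℝ (Fin d)),
      Matrix.toEuclideanLin M x = (WithLp.equiv 2 (Fin d → ℝ)).symm (M *ᵥ (WithLp.equiv 2 _ x)) :=
    fun M x => rfl
  have hker : ∀ x : EuclideanSpace ℝ (Fin d),
      x ∈ LinearMap.ker (Matrix.toEuclideanLin B) ↔ B *ᵥ (WithLp.equiv 2 _ x) = 0 := by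
    intro x
    rw [LinearMap.mem_ker, happ]
    exact ⟨fun h => (WithLp.equiv 2 _).symm.injective (h.trans rfl),
      fun h => by rw [h]; rfl⟩
  have hinj : Set.InjOn (Matrix.toEuclideanLin D)
      (LinearMap.ker (Matrix.toEuclideanLin B) : Set (EuclideanSpace ℝ (Fin d))) := by
    intro x hx y hy hxy
    have hx' := (hker x).mp hx
    have hy' := (hker y).mp hy
    have hD : D *ᵥ ((WithLp.equiv 2 _ x) - (WithLp.equiv 2 _ y)) = 0 := by
      rw [Matrix.mulVec_sub, sub_eq_zero]
      have := congrArg (WithLp.equiv 2 (Fin d → ℝ)) hxy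
      simpa [happ] using this
    have hB : B *ᵥ ((WithLp.equiv 2 _ x) - (WithLp.equiv 2 _ y)) = 0 := by
      rw [Matrix.mulVec_sub, hx', hy', sub_zero]
    have := hinj0 _ hB hD
    have h2 : (WithLp.equiv 2 (Fin d → ℝ)) x = (WithLp.equiv 2 _) y := by
      rwa [sub_eq_zero] at this
    exact (WithLp.equiv 2 _).injective h2
  refine ⟨?_, hinj⟩
  -- inclusion
  have hle : (LinearMap.ker (Matrix.toEuclideanLin B)).map (Matrix.toEuclideanLin D)
      ≤ (LinearMap.range (Matrix.toEuclideanLin B))ᗮ := by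
    rintro _ ⟨x, hx, rfl⟩
    rw [Submodule.mem_orthogonal]
    rintro _ ⟨y, rfl⟩
    have hx' := (hker x).mp hx
    have := key (WithLp.equiv 2 _ x) (WithLp.equiv 2 _ y) hx'
    simpa [happ, PiLp.inner_apply, RCLike.inner_apply, dotProduct, mul_comm] using this
  -- dimension count
  have hd1 : Module.finrank ℝ
        ((LinearMap.ker (Matrix.toEuclideanLin B)).map (Matrix.toEuclideanLin D))
      = Module.finrank ℝ (LinearMap.ker (Matrix.toEuclideanLin B)) := by
    rw [← LinearMap.range_domRestrict]
    have hk : LinearMap.ker ((Matrix.toEuclideanLin D).domRestrict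
        (LinearMap.ker (Matrix.toEuclideanLin B))) = ⊥ := by
      rw [LinearMap.ker_eq_bot']
      rintro ⟨x, hx⟩ hDx
      have hx' := (hker x).mp hx
      have hDx' : D *ᵥ (WithLp.equiv 2 _ x) = 0 := by
        have : Matrix.toEuclideanLin D x = 0 := hDx
        rw [happ] at this
        exact (WithLp.equiv 2 _).symm.injective (this.trans rfl)
      have := hinj0 _ hx' hDx'
      ext
      exact congrFun this _
    have := LinearMap.finrank_range_add_finrank_ker ((Matrix.toEuclideanLin D).domRestrict
        (LinearMap.ker (Matrix.toEuclideanLin B)))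
    rw [hk] at this
    simpa using this
  have hd2 := LinearMap.finrank_range_add_finrank_ker (Matrix.toEuclideanLin B)
  have hd3 := Submodule.finrank_add_finrank_orthogonal
    (K := LinearMap.range (Matrix.toEuclideanLin B))
  have hdim : Module.finrank ℝ (EuclideanSpace ℝ (Fin d)) = d := by simp
  refine Submodule.eq_of_le_of_finrank_le hle ?_
  rw [hd1]
  omega
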